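/- Let L* : Matrix(n×(k+1), ℝ) → ℝ be C² and satisfy the fundamental equations in all entries of its argument: writing the argument as (p | v) with p an n×k matrix and v ∈ ℝⁿ the last column, for all rows A, B ∈ {1,…,n} and all columns I, J ∈ {1,…,k+1}, ∂²L*/∂m_A^I∂m_B^J + ∂²L*/∂m_B^I∂m_A^J = 0. Define L on the set of (n+1)×(k+1) real matrices M with nonzero corner entry u = M_{n+1}^{k+1}, with blocks p (upper-left n×k), v (last column without corner), w (last row without corner), by L(M) := u · L*( p − u⁻¹·v·w | u⁻¹·v ). Then L satisfies the fundamental equations with respect to all entries of the (n+1)×(k+1) matrix M, at every point of its domain: for all rows A', B' ∈ {1,…,n+1} and columns I', J' ∈ {1,…,k+1}, ∂²L/∂M_{A'}^{I'}∂M_{B'}^{J'} + ∂²L/∂M_{B'}^{I'}∂M_{A'}^{J'} = 0. -/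

import Mathlib

open MeasureTheory
open scoped BigOperators

noncomputable section

/-- Product of matrices given as functions (entry `(i,k)` is `∑ j, M i j * N j k`). -/
def mmul {a b c : ℕ} (M : Fin a → Fin b → ℝ) (N : Fin b → Fin c → ℝ) :
    Fin a → Fin c → ℝ :=
  fun i k => ∑ j, M i j * N j k

/-- Determinant of a square matrix given as a function. -/
def fdet {a : ℕ} (M : Fin a → Fin a → ℝ) : ℝ :=
  Matrix.det (Matrix.of M)

/-- Partial derivative of a function of a matrix with respect to the `(i,j)` entry. -/
def pdM {a b : ℕ} (L : (Fin a → Fin b → ℝ) → ℝ) (i : Fin a) (j : Fin b)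
    (m : Fin a → Fin b → ℝ) : ℝ :=
  deriv (fun t : ℝ => L (fun i' j' => m i' j' + (if i' = i ∧ j' = j then t else 0))) 0

/-- Partial derivative of a function of a vector with respect to the `i`-th coordinate. -/
def pdV {a : ℕ} (f : (Fin a → ℝ) → ℝ) (i : Fin a) (x : Fin a → ℝ) : ℝ :=
  deriv (fun t : ℝ => f (fun i' => x i' + (if i' = i then t else 0))) 0

/-- The fundamental equations for a function of an `a × b` matrix:
for all rows `i₁, i₂` and columns `j₁, j₂`,
`∂²L/∂m_{i₁}^{j₁}∂m_{i₂}^{j₂} + ∂²L/∂m_{i₂}^{j₁}∂m_{i₁}^{j₂} = 0`. -/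
def FundEqs {a b : ℕ} (L : (Fin a → Fin b → ℝ) → ℝ) : Prop :=
  ∀ (i₁ i₂ : Fin a) (j₁ j₂ : Fin b) (m : Fin a → Fin b → ℝ),
    pdM (fun m' => pdM L i₂ j₂ m') i₁ j₁ m + pdM (fun m' => pdM L i₁ j₂ m') i₂ j₁ m = 0

/-- The velocity matrix of a path `γ`: `(vel γ t) F A = ∂γ^A/∂t^F (t)`. -/
def vel {r n : ℕ} (γ : (Fin r → ℝ) → (Fin n → ℝ)) (t : Fin r → ℝ) :
    Fin r → Fin n → ℝ :=
  fun F A => pdV (fun s => γ s A) F t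

/-- The matrix of gradients of a copath `f`: `(grad f x) A K = ∂f^K/∂x^A (x)`. -/
def grad {n k : ℕ} (f : (Fin n → ℝ) → (Fin k → ℝ)) (x : Fin n → ℝ) :
    Fin n → Fin k → ℝ :=
  fun A K => pdV (fun y => f y K) A x

/-- An even `r`-form on an open set `U ⊆ ℝⁿ`: a smooth function `L(x, ẋ)` of a point
`x` and an `r × n` matrix `ẋ` which is covariant (`L(x, h·ẋ) = det h · L(x, ẋ)` for
invertible `h`) and satisfies the fundamental equations in the entries of `ẋ`. -/
def IsEvenForm {n r : ℕ} (U : Set (Fin n → ℝ))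
    (L : (Fin n → ℝ) → (Fin r → Fin n → ℝ) → ℝ) : Prop :=
  ContDiffOn ℝ (⊤ : ℕ∞)
      (fun q : (Fin n → ℝ) × (Fin r → Fin n → ℝ) => L q.1 q.2)
      (U ×ˢ (Set.univ : Set (Fin r → Fin n → ℝ))) ∧
  (∀ x ∈ U, ∀ (xdot : Fin r → Fin n → ℝ) (h : Fin r → Fin r → ℝ), fdet h ≠ 0 →
    L x (mmul h xdot) = fdet h * L x xdot) ∧
  (∀ x ∈ U, FundEqs (L x))

/-- The differential of a Lagrangian of paths `L(x, ẋ)`: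
`ΔL(x, (ẋ; ẏ)) = (−1)^r Σ_A ẏ^A (∂L/∂x^A − Σ_{F,B} ẋ_F^B ∂²L/∂x^B∂ẋ_F^A)`,
where `ẋ` consists of the first `r` rows and `ẏ` is the last row of the argument. -/
def Dform {n r : ℕ} (L : (Fin n → ℝ) → (Fin r → Fin n → ℝ) → ℝ) :
    (Fin n → ℝ) → (Fin (r + 1) → Fin n → ℝ) → ℝ :=
  fun x M => (-1 : ℝ) ^ r * ∑ A, M (Fin.last r) A *
    (pdV (fun x' => L x' (fun F => M (Fin.castSucc F))) A x
      - ∑ F, ∑ B, M (Fin.castSucc F) B *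
          pdV (fun x' => pdM (L x') F A (fun G => M (Fin.castSucc G))) B x)

/-- An even mixed form of codegree `k` and additional degree `r` on an open set
`U ⊆ ℝⁿ`: a smooth function `𝓛(x, p, w)` which is right-covariant, left-covariant,
admissible, and satisfies the fundamental equations in the entries of the stacked
`(n+r) × k` matrix (`p` over `w`). -/
def IsMixedForm {n k r : ℕ} (U : Set (Fin n → ℝ))
    (L : (Fin n → ℝ) → (Fin n → Fin k → ℝ) → (Fin r → Fin k → ℝ) → ℝ) : Prop :=
  ContDiffOn ℝ (⊤ : ℕ∞)
      (fun q : (Fin n → ℝ) × (Fin n → Fin k → ℝ) × (Fin r → Fin k → ℝ) =>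
        L q.1 q.2.1 q.2.2)
      (U ×ˢ (Set.univ : Set ((Fin n → Fin k → ℝ) × (Fin r → Fin k → ℝ)))) ∧
  (∀ x ∈ U, ∀ (p : Fin n → Fin k → ℝ) (w : Fin r → Fin k → ℝ) (g : Fin k → Fin k → ℝ),
    fdet g ≠ 0 → L x (mmul p g) (mmul w g) = fdet g * L x p w) ∧
  (∀ x ∈ U, ∀ (p : Fin n → Fin k → ℝ) (w : Fin r → Fin k → ℝ) (h : Fin r → Fin r → ℝ),
    fdet h ≠ 0 → L x p (mmul h w) = fdet h * L x p w) ∧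
  (∀ x ∈ U, ∀ (p : Fin n → Fin k → ℝ) (w : Fin r → Fin k → ℝ) (a : Fin n → Fin r → ℝ),
    L x (p + mmul a w) w = L x p w) ∧
  (∀ x ∈ U, FundEqs (fun m : Fin (n + r) → Fin k → ℝ =>
    L x (fun A => m (Fin.castAdd r A)) (fun F => m (Fin.natAdd n F))))

/-- The differential of a mixed Lagrangian `𝓛(x, p, w)`:
`Δ𝓛(x, p, ŵ) = (−1)^r Σ_{K,A} w'^K ∂²𝓛/∂x^A∂p_A^K (x, p, w)`, where `ŵ` has first
`r` rows `w` and last row `w'`. -/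
def Dmix {n k r : ℕ}
    (L : (Fin n → ℝ) → (Fin n → Fin k → ℝ) → (Fin r → Fin k → ℝ) → ℝ) :
    (Fin n → ℝ) → (Fin n → Fin k → ℝ) → (Fin (r + 1) → Fin k → ℝ) → ℝ :=
  fun x p what => (-1 : ℝ) ^ r * ∑ K, ∑ A, what (Fin.last r) K *
    pdV (fun x' => pdM (fun p' => L x' p' (fun F => what (Fin.castSucc F))) A K p) A x

/-- An even dual form of codegree `k` on an open set `U ⊆ ℝⁿ`: a smooth function
`𝓛(x, p)` of a point `x` and an `n × k` matrix `p` of momenta which is covariant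
(`𝓛(x, p·g) = det g · 𝓛(x, p)` for invertible `g`) and satisfies the fundamental
equations in the entries of `p`. -/
def IsDualForm {n k : ℕ} (U : Set (Fin n → ℝ))
    (L : (Fin n → ℝ) → (Fin n → Fin k → ℝ) → ℝ) : Prop :=
  ContDiffOn ℝ (⊤ : ℕ∞)
      (fun q : (Fin n → ℝ) × (Fin n → Fin k → ℝ) => L q.1 q.2)
      (U ×ˢ (Set.univ : Set (Fin n → Fin k → ℝ))) ∧
  (∀ x ∈ U, ∀ (p : Fin n → Fin k → ℝ) (g : Fin k → Fin k → ℝ), fdet g ≠ 0 →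
    L x (mmul p g) = fdet g * L x p) ∧
  (∀ x ∈ U, FundEqs (L x))

/-- The identity matrix as a function. -/
def idm (n : ℕ) : Fin n → Fin n → ℝ := fun i j => if i = j then 1 else 0

/-- The extension of a function `L*` of an `n × (k+1)` matrix to a function of an
`(n+1) × (k+1)` matrix `M` (with corner entry `u`, last column `v`, last row `w`,
upper-left block `p`) by the formula `L(M) := u · L*(p − u⁻¹·v·w | u⁻¹·v)`. -/
def Lext {n k : ℕ} (Lstar : (Fin n → Fin (k + 1) → ℝ) → ℝ)
    (M : Fin (n + 1) → Fin (k + 1) → ℝ) : ℝ :=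
  M (Fin.last n) (Fin.last k) *
    Lstar (fun A I =>
      if I = Fin.last k then
        (M (Fin.last n) (Fin.last k))⁻¹ * M (Fin.castSucc A) (Fin.last k)
      else
        M (Fin.castSucc A) I - (M (Fin.last n) (Fin.last k))⁻¹ *
          M (Fin.castSucc A) (Fin.last k) * M (Fin.last n) I)

open Filter Topology

-- auxiliary development
def eMat {a b : ℕ} (i : Fin a) (j : Fin b) : Fin a → Fin b → ℝ :=
  fun i' j' => if i' = i ∧ j' = j then (1 : ℝ) else 0

def ten {a b : ℕ} (α : Fin a → ℝ) (β : Fin b → ℝ) : Fin a → Fin b → ℝ :=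
  fun i j => α i * β j

variable {a b : ℕ}

lemma line_hasDerivAt (f : (Fin a → Fin b → ℝ) → ℝ) {s : Set (Fin a → Fin b → ℝ)}
    (hs : IsOpen s) (hf : ContDiffOn ℝ 2 f s) (m X : Fin a → Fin b → ℝ) (t₀ : ℝ)
    (hmem : m + t₀ • X ∈ s) :
    HasDerivAt (fun t : ℝ => f (m + t • X)) (fderiv ℝ f (m + t₀ • X) X) t₀ := by
  have hdiff : DifferentiableAt ℝ f (m + t₀ • X) :=
    ((hf _ hmem).contDiffAt (hs.mem_nhds hmem)).differentiableAt (by norm_num)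
  have hline : HasDerivAt (fun t : ℝ => m + t • X) X t₀ := by
    simpa using ((hasDerivAt_id t₀).smul_const X).const_add m
  exact hdiff.hasFDerivAt.comp_hasDerivAt t₀ hline

lemma line_hasDerivAt2 (f : (Fin a → Fin b → ℝ) → ℝ) {s : Set (Fin a → Fin b → ℝ)}
    (hs : IsOpen s) (hf : ContDiffOn ℝ 2 f s) (m X Y : Fin a → Fin b → ℝ) (t₀ : ℝ)
    (hmem : m + t₀ • X ∈ s) :
    HasDerivAt (fun t : ℝ => fderiv ℝ f (m + t • X) Y)
      (fderiv ℝ (fderiv ℝ f) (m + t₀ • X) X Y) t₀ := by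
  have h1 : ContDiffAt ℝ 1 (fderiv ℝ f) (m + t₀ • X) :=
    ((hf _ hmem).contDiffAt (hs.mem_nhds hmem)).fderiv_right (by norm_num)
  have hdiff : DifferentiableAt ℝ (fderiv ℝ f) (m + t₀ • X) :=
    h1.differentiableAt (by norm_num)
  have hline : HasDerivAt (fun t : ℝ => m + t • X) X t₀ := by
    simpa using ((hasDerivAt_id t₀).smul_const X).const_add m
  have h2 : HasDerivAt (fun t : ℝ => fderiv ℝ f (m + t • X))
      (fderiv ℝ (fderiv ℝ f) (m + t₀ • X) X) t₀ :=
    hdiff.hasFDerivAt.comp_hasDerivAt t₀ hline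
  simpa using h2.clm_apply (hasDerivAt_const t₀ Y)

lemma pert_eq (m : Fin a → Fin b → ℝ) (i : Fin a) (j : Fin b) (t : ℝ) :
    (fun i' j' => m i' j' + (if i' = i ∧ j' = j then t else 0)) = m + t • eMat i j := by
  funext i' j'
  simp only [eMat, Pi.add_apply, Pi.smul_apply, smul_eq_mul, mul_ite, mul_one, mul_zero]

lemma pdM_def' (g : (Fin a → Fin b → ℝ) → ℝ) (i : Fin a) (j : Fin b) (m : Fin a → Fin b → ℝ) :
    pdM g i j m = deriv (fun t : ℝ => g (m + t • eMat i j)) 0 := by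
  unfold pdM
  congr 1
  funext t
  rw [pert_eq]

lemma line_mem_ev {s : Set (Fin a → Fin b → ℝ)} (hs : IsOpen s) {m : Fin a → Fin b → ℝ}
    (hm : m ∈ s) (X : Fin a → Fin b → ℝ) : ∀ᶠ t : ℝ in 𝓝 0, m + t • X ∈ s := by
  have hcont : ContinuousAt (fun t : ℝ => m + t • X) 0 :=
    (continuous_const.add (continuous_id.smul continuous_const)).continuousAt
  have := hcont.eventually_mem (hs.mem_nhds (by simpa using hm))
  simpa using this

lemma pdM_eq_fderiv (f : (Fin a → Fin b → ℝ) → ℝ) {s : Set (Fin a → Fin b → ℝ)}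
    (hs : IsOpen s) (hf : ContDiffOn ℝ 2 f s) (i : Fin a) (j : Fin b)
    {m : Fin a → Fin b → ℝ} (hm : m ∈ s) :
    pdM f i j m = fderiv ℝ f m (eMat i j) := by
  rw [pdM_def']
  have h := line_hasDerivAt f hs hf m (eMat i j) 0 (by simpa using hm)
  rw [h.deriv]
  simp

lemma pdM2_eq_fderiv2 (f : (Fin a → Fin b → ℝ) → ℝ) {s : Set (Fin a → Fin b → ℝ)}
    (hs : IsOpen s) (hf : ContDiffOn ℝ 2 f s) (i₁ i₂ : Fin a) (j₁ j₂ : Fin b)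
    {m : Fin a → Fin b → ℝ} (hm : m ∈ s) :
    pdM (fun m' => pdM f i₂ j₂ m') i₁ j₁ m
      = fderiv ℝ (fderiv ℝ f) m (eMat i₁ j₁) (eMat i₂ j₂) := by
  rw [pdM_def']
  have hev : (fun t : ℝ => pdM f i₂ j₂ (m + t • eMat i₁ j₁))
      =ᶠ[𝓝 0] fun t : ℝ => fderiv ℝ f (m + t • eMat i₁ j₁) (eMat i₂ j₂) := by
    filter_upwards [line_mem_ev hs hm (eMat i₁ j₁)] with t ht
    exact pdM_eq_fderiv f hs hf i₂ j₂ ht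
  rw [hev.deriv_eq]
  have h := line_hasDerivAt2 f hs hf m (eMat i₁ j₁) (eMat i₂ j₂) 0 (by simpa using hm)
  rw [h.deriv]
  simp

lemma hess_symm (f : (Fin a → Fin b → ℝ) → ℝ) {s : Set (Fin a → Fin b → ℝ)}
    (hs : IsOpen s) (hf : ContDiffOn ℝ 2 f s) {m : Fin a → Fin b → ℝ} (hm : m ∈ s)
    (X Y : Fin a → Fin b → ℝ) :
    fderiv ℝ (fderiv ℝ f) m X Y = fderiv ℝ (fderiv ℝ f) m Y X := by
  apply second_derivative_symmetric_of_eventually (f := f) (f' := fderiv ℝ f)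
  · filter_upwards [hs.mem_nhds hm] with y hy
    exact (((hf _ hy).contDiffAt (hs.mem_nhds hy)).differentiableAt (by norm_num)).hasFDerivAt
  · have h1 : ContDiffAt ℝ 1 (fderiv ℝ f) m :=
      ((hf _ hm).contDiffAt (hs.mem_nhds hm)).fderiv_right (by norm_num)
    exact (h1.differentiableAt (by norm_num)).hasFDerivAt

lemma ten_eq_sum (α : Fin a → ℝ) (β : Fin b → ℝ) :
    ten α β = ∑ i, ∑ j, (α i * β j) • eMat i j := by
  funext i' j'
  simp only [ten, eMat, Finset.sum_apply, Pi.smul_apply, smul_eq_mul, mul_ite, mul_one,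
    mul_zero, ite_and]
  rw [Finset.sum_comm]
  simp [Finset.sum_ite_eq']

lemma sum4_zero (γ : Fin a → ℝ) (δ : Fin b → ℝ) (h : Fin a → Fin b → Fin a → Fin b → ℝ)
    (hanti : ∀ i1 j1 i2 j2, h i1 j1 i2 j2 + h i2 j1 i1 j2 = 0) :
    ∑ i1, ∑ j1, ∑ i2, ∑ j2,
      (γ i1 * δ j1) * ((γ i2 * δ j2) * h i1 j1 i2 j2) = 0 := by
  have hcomm : (∑ i1 : Fin a, ∑ j1 : Fin b, ∑ i2 : Fin a, ∑ j2 : Fin b,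
      (γ i1 * δ j1) * ((γ i2 * δ j2) * h i1 j1 i2 j2))
      = ∑ i1 : Fin a, ∑ i2 : Fin a, ∑ j1 : Fin b, ∑ j2 : Fin b,
        (γ i1 * δ j1) * ((γ i2 * δ j2) * h i1 j1 i2 j2) :=
    Finset.sum_congr rfl (fun i1 _ => Finset.sum_comm)
  rw [hcomm]
  set F : Fin a → Fin a → ℝ :=
    fun i1 i2 => ∑ j1, ∑ j2, (γ i1 * δ j1) * ((γ i2 * δ j2) * h i1 j1 i2 j2) with hF
  have key : ∀ i1 i2, F i1 i2 + F i2 i1 = 0 := by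
    intro i1 i2
    rw [hF]
    rw [← Finset.sum_add_distrib]
    refine Finset.sum_eq_zero fun j1 _ => ?_
    rw [← Finset.sum_add_distrib]
    refine Finset.sum_eq_zero fun j2 _ => ?_
    have := hanti i1 j1 i2 j2
    linear_combination (γ i1 * δ j1) * (γ i2 * δ j2) * this
  have hswap : ∑ i1, ∑ i2, F i1 i2 = ∑ i1, ∑ i2, F i2 i1 := Finset.sum_comm
  have hsum : ∑ i1, ∑ i2, F i1 i2 + ∑ i1, ∑ i2, F i2 i1 = 0 := by
    rw [← Finset.sum_add_distrib]
    refine Finset.sum_eq_zero fun i1 _ => ?_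
    rw [← Finset.sum_add_distrib]
    exact Finset.sum_eq_zero fun i2 _ => key i1 i2
  have : ∑ i1, ∑ i2, F i1 i2 = 0 := by linarith [hswap, hsum]
  exact this

lemma fund_rank1 (f : (Fin a → Fin b → ℝ) → ℝ) (hf : ContDiff ℝ 2 f) (hfund : FundEqs f)
    (q : Fin a → Fin b → ℝ) (γ : Fin a → ℝ) (δ : Fin b → ℝ) :
    fderiv ℝ (fderiv ℝ f) q (ten γ δ) (ten γ δ) = 0 := by
  have hOn : ContDiffOn ℝ 2 f Set.univ := hf.contDiffOn
  have hpd : ∀ (i₁ i₂ : Fin a) (j₁ j₂ : Fin b),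
      fderiv ℝ (fderiv ℝ f) q (eMat i₁ j₁) (eMat i₂ j₂)
        + fderiv ℝ (fderiv ℝ f) q (eMat i₂ j₁) (eMat i₁ j₂) = 0 := by
    intro i₁ i₂ j₁ j₂
    have h := hfund i₁ i₂ j₁ j₂ q
    rwa [pdM2_eq_fderiv2 f isOpen_univ hOn i₁ i₂ j₁ j₂ (Set.mem_univ q),
      pdM2_eq_fderiv2 f isOpen_univ hOn i₂ i₁ j₁ j₂ (Set.mem_univ q)] at h
  have expand : fderiv ℝ (fderiv ℝ f) q (ten γ δ) (ten γ δ)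
      = ∑ i1, ∑ j1, ∑ i2, ∑ j2, (γ i1 * δ j1) *
          ((γ i2 * δ j2) * fderiv ℝ (fderiv ℝ f) q (eMat i2 j2) (eMat i1 j1)) := by
    rw [ten_eq_sum]
    simp only [map_sum, _root_.map_smul, ContinuousLinearMap.sum_apply,
      ContinuousLinearMap.smul_apply, smul_eq_mul, Finset.mul_sum]
  rw [expand]
  exact sum4_zero γ δ _ (fun i1 j1 i2 j2 => hpd i2 i1 j2 j1)

lemma fund_affine (f : (Fin a → Fin b → ℝ) → ℝ) (hf : ContDiff ℝ 2 f) (hfund : FundEqs f)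
    (q : Fin a → Fin b → ℝ) (γ : Fin a → ℝ) (δ : Fin b → ℝ) :
    ∃ c₀ c₁ : ℝ, ∀ s : ℝ, f (q + s • ten γ δ) = c₀ + c₁ * s := by
  have hOn : ContDiffOn ℝ 2 f Set.univ := hf.contDiffOn
  have hd : ∀ s : ℝ, HasDerivAt (fun t : ℝ => f (q + t • ten γ δ))
      (fderiv ℝ f (q + s • ten γ δ) (ten γ δ)) s :=
    fun s => line_hasDerivAt f isOpen_univ hOn q (ten γ δ) s trivial
  have hd2 : ∀ s : ℝ, HasDerivAt (fun t : ℝ => fderiv ℝ f (q + t • ten γ δ) (ten γ δ)) 0 s := by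
    intro s
    have h := line_hasDerivAt2 f isOpen_univ hOn q (ten γ δ) (ten γ δ) s trivial
    rwa [fund_rank1 f hf hfund _ γ δ] at h
  have hconst : ∀ s : ℝ,
      fderiv ℝ f (q + s • ten γ δ) (ten γ δ) = fderiv ℝ f (q + (0:ℝ) • ten γ δ) (ten γ δ) :=
    fun s => is_const_of_deriv_eq_zero (fun t => (hd2 t).differentiableAt)
      (fun t => (hd2 t).deriv) s 0
  refine ⟨f q, fderiv ℝ f (q + (0:ℝ) • ten γ δ) (ten γ δ), fun s => ?_⟩
  set c₁ := fderiv ℝ f (q + (0:ℝ) • ten γ δ) (ten γ δ) with hc₁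
  have hF : ∀ t : ℝ, HasDerivAt (fun t : ℝ => f (q + t • ten γ δ) - c₁ * t) 0 t := by
    intro t
    have h1 := hd t
    rw [hconst t] at h1
    have h2 : HasDerivAt (fun t : ℝ => c₁ * t) c₁ t := by
      simpa using (hasDerivAt_id t).const_mul c₁
    have h3 := h1.sub h2
    rw [sub_self] at h3
    exact h3
  have h := is_const_of_deriv_eq_zero (fun t => (hF t).differentiableAt)
    (fun t => (hF t).deriv) s 0
  simp only [zero_smul, add_zero, mul_zero, sub_zero] at h
  linarith [h]

def Tmap {n k : ℕ} (M : Fin (n + 1) → Fin (k + 1) → ℝ) : Fin n → Fin (k + 1) → ℝ :=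
  fun A I =>
    if I = Fin.last k then
      (M (Fin.last n) (Fin.last k))⁻¹ * M (Fin.castSucc A) (Fin.last k)
    else
      M (Fin.castSucc A) I - (M (Fin.last n) (Fin.last k))⁻¹ *
        M (Fin.castSucc A) (Fin.last k) * M (Fin.last n) I

lemma Lext_eq_Tmap {n k : ℕ} (Lstar : (Fin n → Fin (k + 1) → ℝ) → ℝ)
    (M : Fin (n + 1) → Fin (k + 1) → ℝ) :
    Lext Lstar M = M (Fin.last n) (Fin.last k) * Lstar (Tmap M) := rfl

variable {n k : ℕ}

lemma corner_open :
    IsOpen {M : Fin (n + 1) → Fin (k + 1) → ℝ | M (Fin.last n) (Fin.last k) ≠ 0} := by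
  have hc : Continuous (fun M : Fin (n + 1) → Fin (k + 1) → ℝ => M (Fin.last n) (Fin.last k)) :=
    (continuous_apply (Fin.last k)).comp (continuous_apply (Fin.last n))
  exact isOpen_ne.preimage hc

lemma hcoord (i : Fin (n + 1)) (j : Fin (k + 1)) :
    ContDiff ℝ 2 (fun M : Fin (n + 1) → Fin (k + 1) → ℝ => M i j) :=
  ((ContinuousLinearMap.proj (R := ℝ) (φ := fun _ : Fin (k + 1) => ℝ) j).comp
    (ContinuousLinearMap.proj (R := ℝ) (φ := fun _ : Fin (n + 1) => Fin (k + 1) → ℝ) i)).contDiff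

lemma lext_contDiffOn (Lstar : (Fin n → Fin (k + 1) → ℝ) → ℝ) (hC2 : ContDiff ℝ 2 Lstar) :
    ContDiffOn ℝ 2 (Lext Lstar)
      {M : Fin (n + 1) → Fin (k + 1) → ℝ | M (Fin.last n) (Fin.last k) ≠ 0} := by
  have hinv : ContDiffOn ℝ 2
      (fun M : Fin (n + 1) → Fin (k + 1) → ℝ => (M (Fin.last n) (Fin.last k))⁻¹)
      {M : Fin (n + 1) → Fin (k + 1) → ℝ | M (Fin.last n) (Fin.last k) ≠ 0} :=
    (hcoord _ _).contDiffOn.inv (fun M hM => hM)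
  have hT : ContDiffOn ℝ 2 (fun M => Tmap M)
      {M : Fin (n + 1) → Fin (k + 1) → ℝ | M (Fin.last n) (Fin.last k) ≠ 0} := by
    apply contDiffOn_pi.2
    intro A
    apply contDiffOn_pi.2
    intro I
    rcases eq_or_ne I (Fin.last k) with hI | hI
    · simp only [Tmap, if_pos hI]
      exact hinv.mul (hcoord _ _).contDiffOn
    · simp only [Tmap, if_neg hI]
      exact (hcoord _ _).contDiffOn.sub
        ((hinv.mul (hcoord _ _).contDiffOn).mul (hcoord _ _).contDiffOn)
  have hrw : Lext Lstar = fun M => M (Fin.last n) (Fin.last k) * Lstar (Tmap M) := rfl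
  rw [hrw]
  exact (hcoord _ _).contDiffOn.mul (hC2.comp_contDiffOn hT)

lemma lext_rank1 (Lstar : (Fin n → Fin (k + 1) → ℝ) → ℝ) (hC2 : ContDiff ℝ 2 Lstar)
    (hfund : FundEqs Lstar) (M : Fin (n + 1) → Fin (k + 1) → ℝ)
    (hM : M (Fin.last n) (Fin.last k) ≠ 0) (α : Fin (n + 1) → ℝ) (β : Fin (k + 1) → ℝ) :
    fderiv ℝ (fderiv ℝ (Lext Lstar)) M (ten α β) (ten α β) = 0 := by
  have hs : IsOpen {M : Fin (n + 1) → Fin (k + 1) → ℝ | M (Fin.last n) (Fin.last k) ≠ 0} :=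
    corner_open
  have hLC := lext_contDiffOn Lstar hC2
  have hMs : M ∈ {M : Fin (n + 1) → Fin (k + 1) → ℝ | M (Fin.last n) (Fin.last k) ≠ 0} := hM
  obtain ⟨c₀, c₁, hc⟩ := fund_affine Lstar hC2 hfund (Tmap M)
    (fun A => α (Fin.castSucc A)
      - α (Fin.last n) * (M (Fin.last n) (Fin.last k))⁻¹ * M (Fin.castSucc A) (Fin.last k))
    (fun I => if I = Fin.last k then β (Fin.last k)
      else M (Fin.last n) (Fin.last k) * β I - β (Fin.last k) * M (Fin.last n) I)
  have key : ∀ t : ℝ,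
      M (Fin.last n) (Fin.last k) + t * (α (Fin.last n) * β (Fin.last k)) ≠ 0 →
      Lext Lstar (M + t • ten α β)
        = (M (Fin.last n) (Fin.last k) + t * (α (Fin.last n) * β (Fin.last k))) * c₀
          + c₁ * t := by
    intro t ht
    have hcorner : (M + t • ten α β) (Fin.last n) (Fin.last k)
        = M (Fin.last n) (Fin.last k) + t * (α (Fin.last n) * β (Fin.last k)) := by
      simp [ten]
    have hA : Tmap (M + t • ten α β)
        = Tmap M + (t / (M (Fin.last n) (Fin.last k)
              + t * (α (Fin.last n) * β (Fin.last k)))) • ten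
            (fun A => α (Fin.castSucc A)
              - α (Fin.last n) * (M (Fin.last n) (Fin.last k))⁻¹
                * M (Fin.castSucc A) (Fin.last k))
            (fun I => if I = Fin.last k then β (Fin.last k)
              else M (Fin.last n) (Fin.last k) * β I - β (Fin.last k) * M (Fin.last n) I) := by
      funext A I
      rcases eq_or_ne I (Fin.last k) with hI | hI
      · subst hI
        simp only [Tmap, if_pos rfl, Pi.add_apply, Pi.smul_apply, smul_eq_mul, ten]
        simp only [↓reduceIte]
        have hd : (M (Fin.last n) (Fin.last k) + t * (α (Fin.last n) * β (Fin.last k))) * (M (Fin.last n) (Fin.last k) + t * (α (Fin.last n) * β (Fin.last k)))⁻¹ = 1 := mul_inv_cancel₀ ht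
        have hu : M (Fin.last n) (Fin.last k) * (M (Fin.last n) (Fin.last k))⁻¹ = 1 := mul_inv_cancel₀ hM
        linear_combination (M (Fin.castSucc A) (Fin.last k) * (M (Fin.last n) (Fin.last k))⁻¹) * hd - (M (Fin.castSucc A) (Fin.last k) * (M (Fin.last n) (Fin.last k) + t * (α (Fin.last n) * β (Fin.last k)))⁻¹) * hu
      · simp only [Tmap, if_neg hI, Pi.add_apply, Pi.smul_apply, smul_eq_mul, ten]
        have hd : (M (Fin.last n) (Fin.last k) + t * (α (Fin.last n) * β (Fin.last k))) * (M (Fin.last n) (Fin.last k) + t * (α (Fin.last n) * β (Fin.last k)))⁻¹ = 1 := mul_inv_cancel₀ ht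
        have hu : M (Fin.last n) (Fin.last k) * (M (Fin.last n) (Fin.last k))⁻¹ = 1 := mul_inv_cancel₀ hM
        linear_combination (-(t * α (Fin.castSucc A) * β I) - M (Fin.castSucc A) (Fin.last k) * M (Fin.last n) I * (M (Fin.last n) (Fin.last k))⁻¹) * hd + (t * α (Fin.last n) * (M (Fin.last n) (Fin.last k) + t * (α (Fin.last n) * β (Fin.last k)))⁻¹ * M (Fin.castSucc A) (Fin.last k) * β I + M (Fin.castSucc A) (Fin.last k) * M (Fin.last n) I * (M (Fin.last n) (Fin.last k) + t * (α (Fin.last n) * β (Fin.last k)))⁻¹) * hu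
    rw [Lext_eq_Tmap, hcorner, hA, hc]
    have hd : (M (Fin.last n) (Fin.last k) + t * (α (Fin.last n) * β (Fin.last k))) * (M (Fin.last n) (Fin.last k) + t * (α (Fin.last n) * β (Fin.last k)))⁻¹ = 1 := mul_inv_cancel₀ ht
    linear_combination (c₁ * t) * hd
  have hev0 : ∀ᶠ t : ℝ in 𝓝 0,
      M (Fin.last n) (Fin.last k) + t * (α (Fin.last n) * β (Fin.last k)) ≠ 0 := by
    have hcont : ContinuousAt (fun t : ℝ =>
        M (Fin.last n) (Fin.last k) + t * (α (Fin.last n) * β (Fin.last k))) 0 := by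
      fun_prop
    exact hcont.eventually_mem (isOpen_ne.mem_nhds (by simpa using hM))
  have hevs : ∀ᶠ t : ℝ in 𝓝 0,
      M + t • ten α β ∈ {M : Fin (n + 1) → Fin (k + 1) → ℝ |
        M (Fin.last n) (Fin.last k) ≠ 0} := line_mem_ev hs hMs (ten α β)
  have hder : (fun t : ℝ => deriv (fun r : ℝ => Lext Lstar (M + r • ten α β)) t)
      =ᶠ[𝓝 0] fun t : ℝ => fderiv ℝ (Lext Lstar) (M + t • ten α β) (ten α β) := by
    filter_upwards [hevs] with t ht
    exact (line_hasDerivAt (Lext Lstar) hs hLC M (ten α β) t ht).deriv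
  have haff : (fun t : ℝ => Lext Lstar (M + t • ten α β))
      =ᶠ[𝓝 0] fun t : ℝ => (M (Fin.last n) (Fin.last k)
        + t * (α (Fin.last n) * β (Fin.last k))) * c₀ + c₁ * t := hev0.mono key
  have hderaff : deriv (fun t : ℝ => (M (Fin.last n) (Fin.last k)
        + t * (α (Fin.last n) * β (Fin.last k))) * c₀ + c₁ * t)
      = fun _ : ℝ => (α (Fin.last n) * β (Fin.last k)) * c₀ + c₁ := by
    funext t
    have h1 : HasDerivAt (fun t : ℝ => (M (Fin.last n) (Fin.last k)
        + t * (α (Fin.last n) * β (Fin.last k))) * c₀ + c₁ * t)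
        ((α (Fin.last n) * β (Fin.last k)) * c₀ + c₁) t := by
      have ha' : HasDerivAt (fun t : ℝ => M (Fin.last n) (Fin.last k)
          + t * (α (Fin.last n) * β (Fin.last k)))
          (α (Fin.last n) * β (Fin.last k)) t := by
        simpa using ((hasDerivAt_id t).mul_const
          (α (Fin.last n) * β (Fin.last k))).const_add (M (Fin.last n) (Fin.last k))
      have hb' : HasDerivAt (fun t : ℝ => c₁ * t) c₁ t := by
        simpa using (hasDerivAt_id t).const_mul c₁
      exact (ha'.mul_const c₀).add hb'
    exact h1.deriv
  have hconstder : (fun t : ℝ => deriv (fun r : ℝ => Lext Lstar (M + r • ten α β)) t)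
      =ᶠ[𝓝 0] fun _ : ℝ => (α (Fin.last n) * β (Fin.last k)) * c₀ + c₁ := by
    have := haff.deriv
    rw [hderaff] at this
    exact this
  have hfinal : (fun t : ℝ => fderiv ℝ (Lext Lstar) (M + t • ten α β) (ten α β))
      =ᶠ[𝓝 0] fun _ : ℝ => (α (Fin.last n) * β (Fin.last k)) * c₀ + c₁ :=
    hder.symm.trans hconstder
  have hH := line_hasDerivAt2 (Lext Lstar) hs hLC M (ten α β) (ten α β) 0 (by simpa using hMs)
  have hd0 := hfinal.deriv_eq
  rw [hH.deriv] at hd0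
  simpa using hd0

/-- If a C² function `L*` of an `n × (k+1)` matrix satisfies the
fundamental equations, then its extension `L(M) = u · L*(p − u⁻¹·v·w | u⁻¹·v)`
satisfies the fundamental equations in all entries of the `(n+1) × (k+1)` matrix
`M`, at every point where the corner entry `u` is nonzero. -/
theorem statement_9 (n k : ℕ) (Lstar : (Fin n → Fin (k + 1) → ℝ) → ℝ)
    (hC2 : ContDiff ℝ 2 Lstar) (hfund : FundEqs Lstar) :
    ∀ M : Fin (n + 1) → Fin (k + 1) → ℝ, M (Fin.last n) (Fin.last k) ≠ 0 →
      ∀ (A' B' : Fin (n + 1)) (I' J' : Fin (k + 1)),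
        pdM (fun M' => pdM (Lext Lstar) B' J' M') A' I' M
          + pdM (fun M' => pdM (Lext Lstar) A' J' M') B' I' M = 0 := by
  intro M hM A' B' I' J'
  have hs : IsOpen {M : Fin (n + 1) → Fin (k + 1) → ℝ | M (Fin.last n) (Fin.last k) ≠ 0} :=
    corner_open
  have hLC := lext_contDiffOn Lstar hC2
  have hMs : M ∈ {M : Fin (n + 1) → Fin (k + 1) → ℝ | M (Fin.last n) (Fin.last k) ≠ 0} := hM
  rw [pdM2_eq_fderiv2 (Lext Lstar) hs hLC A' B' I' J' hMs,
      pdM2_eq_fderiv2 (Lext Lstar) hs hLC B' A' I' J' hMs]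
  have hsym : ∀ X Y : Fin (n + 1) → Fin (k + 1) → ℝ,
      fderiv ℝ (fderiv ℝ (Lext Lstar)) M X Y = fderiv ℝ (fderiv ℝ (Lext Lstar)) M Y X :=
    hess_symm (Lext Lstar) hs hLC hMs
  have hr1 := lext_rank1 Lstar hC2 hfund M hM
  have hadd1 : ∀ (α α' : Fin (n + 1) → ℝ) (β : Fin (k + 1) → ℝ),
      ten (α + α') β = ten α β + ten α' β := by
    intro α α' β; funext i j; simp [ten]; ring
  have hadd2 : ∀ (α : Fin (n + 1) → ℝ) (β β' : Fin (k + 1) → ℝ),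
      ten α (β + β') = ten α β + ten α β' := by
    intro α β β'; funext i j; simp [ten]; ring
  set H := fderiv ℝ (fderiv ℝ (Lext Lstar)) M with hH
  have step1 : ∀ (α α' : Fin (n + 1) → ℝ) (β : Fin (k + 1) → ℝ),
      H (ten α β) (ten α' β) = 0 := by
    intro α α' β
    have h0 := hr1 (α + α') β
    rw [hadd1] at h0
    simp only [map_add, ContinuousLinearMap.add_apply] at h0
    rw [hr1 α β, hr1 α' β] at h0
    have hsy := hsym (ten α β) (ten α' β)
    linarith
  have step2 : ∀ (α α' : Fin (n + 1) → ℝ) (β β' : Fin (k + 1) → ℝ),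
      H (ten α β) (ten α' β') + H (ten α' β) (ten α β') = 0 := by
    intro α α' β β'
    have h0 := step1 α α' (β + β')
    rw [hadd2 α β β', hadd2 α' β β'] at h0
    simp only [map_add, ContinuousLinearMap.add_apply] at h0
    rw [step1 α α' β, step1 α α' β'] at h0
    have hsy := hsym (ten α β') (ten α' β)
    linarith
  have heM : ∀ (i : Fin (n + 1)) (j : Fin (k + 1)), eMat i j
      = ten (fun i' => if i' = i then (1 : ℝ) else 0)
          (fun j' => if j' = j then (1 : ℝ) else 0) := by
    intro i j; funext i' j'
    simp only [eMat, ten]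
    split_ifs with h1 h2 h3 <;> simp_all
  rw [heM A' I', heM B' J', heM B' I', heM A' J']
  exact step2 _ _ _ _
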